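/- For every natural number m ≥ 0 and every integer n ≥ 1, lim_{k→∞} ((n−1)!/k^{n−1}) · ∑_{ℓ=0}^{k} C(k−ℓ+n−1, n−1) · m^ℓ/ℓ! = e^m, where e^m = exp(m). -/
import Mathlib

open Filter Finset

private lemma aux_shift_div_tendsto (a : ℝ) :
    Tendsto (fun k : ℕ => ((k : ℝ) + a) / (k : ℝ)) atTop (nhds 1) := by
  have h : Tendsto (fun k : ℕ => 1 + a / (k : ℝ)) atTop (nhds 1) := by
    simpa using tendsto_const_nhds.add (tendsto_const_div_atTop_nhds_zero_nat a)
  refine Tendsto.congr' ?_ h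
  filter_upwards [eventually_ge_atTop 1] with k hk
  have hk0 : (k : ℝ) ≠ 0 := by
    exact Nat.cast_ne_zero.mpr (by omega)
  field_simp

private lemma aux_coef_tendsto (m n : ℕ) (hn : 1 ≤ n) (ℓ : ℕ) :
    Tendsto (fun k : ℕ =>
      (((n - 1).factorial : ℝ) * ((k - ℓ + n - 1).choose (n - 1) : ℝ)) / (k : ℝ) ^ (n - 1))
      atTop (nhds 1) := by
  have hprod : Tendsto (fun k : ℕ =>
      ∏ i ∈ Finset.range (n - 1), (((k : ℝ) + (((n - 1 - i : ℕ) : ℝ) - ℓ)) / (k : ℝ)))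
      atTop (nhds 1) := by
    have := tendsto_finset_prod (f := fun (i : ℕ) (k : ℕ) =>
        ((k : ℝ) + (((n - 1 - i : ℕ) : ℝ) - ℓ)) / (k : ℝ))
        (a := fun _ => (1 : ℝ)) (Finset.range (n - 1))
        (fun i _ => aux_shift_div_tendsto _)
    simpa using this
  refine Tendsto.congr' ?_ hprod
  filter_upwards [eventually_ge_atTop ℓ, eventually_ge_atTop 1] with k hk hk1
  have hkey : ((n - 1).factorial : ℝ) * ((k - ℓ + n - 1).choose (n - 1) : ℝ)
      = ∏ i ∈ Finset.range (n - 1), ((k : ℝ) + (((n - 1 - i : ℕ) : ℝ) - ℓ)) := by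
    have h1 : ((k - ℓ + n - 1).descFactorial (n - 1) : ℝ)
        = ((n - 1).factorial : ℝ) * ((k - ℓ + n - 1).choose (n - 1) : ℝ) := by
      exact_mod_cast congrArg (Nat.cast (R := ℝ))
        (Nat.descFactorial_eq_factorial_mul_choose (k - ℓ + n - 1) (n - 1))
    rw [← h1, Nat.descFactorial_eq_prod_range, Nat.cast_prod]
    refine Finset.prod_congr rfl fun i hi => ?_
    have hi' : i < n - 1 := Finset.mem_range.mp hi
    have : k - ℓ + n - 1 - i = (k - ℓ) + (n - 1 - i) := by omega
    rw [this]
    push_cast [Nat.cast_sub hk]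
    ring
  rw [Finset.prod_div_distrib, Finset.prod_const, Finset.card_range, hkey]

/-- For every `m ≥ 0` and every `n ≥ 1`,
`lim_{k→∞} ((n−1)!/k^{n−1}) · ∑_{ℓ=0}^{k} C(k−ℓ+n−1, n−1) · m^ℓ/ℓ! = e^m`. -/
theorem tendsto_weighted_choose_sum_exp (m n : ℕ) (hn : 1 ≤ n) :
    Tendsto (fun k : ℕ =>
        (((n - 1).factorial : ℝ) / (k : ℝ) ^ (n - 1)) *
          ∑ ℓ ∈ Finset.range (k + 1),
            ((k - ℓ + n - 1).choose (n - 1) : ℝ) * (m : ℝ) ^ ℓ / (ℓ.factorial : ℝ))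
      atTop (nhds (Real.exp m)) := by
  set f : ℕ → ℕ → ℝ := fun k ℓ =>
    if ℓ ≤ k then
      ((((n - 1).factorial : ℝ) * ((k - ℓ + n - 1).choose (n - 1) : ℝ)) / (k : ℝ) ^ (n - 1)) *
        ((m : ℝ) ^ ℓ / (ℓ.factorial : ℝ))
    else 0 with hf
  have hexp : Real.exp m = ∑' ℓ : ℕ, (m : ℝ) ^ ℓ / (ℓ.factorial : ℝ) := by
    rw [Real.exp_eq_exp_ℝ, NormedSpace.exp_eq_tsum_div]
  rw [hexp]
  have hmain : Tendsto (fun k => ∑' ℓ, f k ℓ) atTop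
      (nhds (∑' ℓ : ℕ, (m : ℝ) ^ ℓ / (ℓ.factorial : ℝ))) := by
    refine tendsto_tsum_of_dominated_convergence
      (bound := fun ℓ => ((n + 1 : ℕ) : ℝ) ^ (n - 1) * ((m : ℝ) ^ ℓ / (ℓ.factorial : ℝ)))
      (((Real.summable_pow_div_factorial m).mul_left _)) ?_ ?_
    · intro ℓ
      have h1 : Tendsto (fun k : ℕ =>
          ((((n - 1).factorial : ℝ) * ((k - ℓ + n - 1).choose (n - 1) : ℝ)) / (k : ℝ) ^ (n - 1)) *
            ((m : ℝ) ^ ℓ / (ℓ.factorial : ℝ))) atTop (nhds ((m : ℝ) ^ ℓ / (ℓ.factorial : ℝ))) := by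
        simpa using (aux_coef_tendsto m n hn ℓ).mul_const ((m : ℝ) ^ ℓ / (ℓ.factorial : ℝ))
      refine Tendsto.congr' ?_ h1
      filter_upwards [eventually_ge_atTop ℓ] with k hk
      simp [hf, hk]
    · filter_upwards [eventually_ge_atTop 1] with k hk1 ℓ
      by_cases hk : ℓ ≤ k
      · have hterm : f k ℓ =
            ((((n - 1).factorial : ℝ) * ((k - ℓ + n - 1).choose (n - 1) : ℝ)) / (k : ℝ) ^ (n - 1)) *
              ((m : ℝ) ^ ℓ / (ℓ.factorial : ℝ)) := by simp [hf, hk]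
        have hnonneg : 0 ≤ f k ℓ := by rw [hterm]; positivity
        rw [Real.norm_eq_abs, abs_of_nonneg hnonneg, hterm]
        have hc : (((n - 1).factorial : ℝ) * ((k - ℓ + n - 1).choose (n - 1) : ℝ)) / (k : ℝ) ^ (n - 1)
            ≤ ((n + 1 : ℕ) : ℝ) ^ (n - 1) := by
          have hnat : (n - 1).factorial * (k - ℓ + n - 1).choose (n - 1)
              ≤ (n + 1) ^ (n - 1) * k ^ (n - 1) := by
            rw [← Nat.descFactorial_eq_factorial_mul_choose]
            calc (k - ℓ + n - 1).descFactorial (n - 1)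
                ≤ (k - ℓ + n - 1) ^ (n - 1) := Nat.descFactorial_le_pow _ _
              _ ≤ ((n + 1) * k) ^ (n - 1) := by
                  refine Nat.pow_le_pow_left ?_ _
                  have hnk : n ≤ n * k := Nat.le_mul_of_pos_right n (by omega)
                  rw [add_mul, one_mul]
                  omega
              _ = (n + 1) ^ (n - 1) * k ^ (n - 1) := by rw [Nat.mul_pow]
          have hkpos : (0 : ℝ) < (k : ℝ) ^ (n - 1) := by
            have : (0 : ℝ) < (k : ℝ) := by exact_mod_cast hk1
            positivity
          rw [div_le_iff₀ hkpos]
          exact_mod_cast hnat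
        have hmp : 0 ≤ (m : ℝ) ^ ℓ / (ℓ.factorial : ℝ) := by positivity
        exact mul_le_mul_of_nonneg_right hc hmp
      · have : f k ℓ = 0 := by simp [hf, hk]
        rw [this]
        simp only [norm_zero]
        positivity
  refine Tendsto.congr' ?_ hmain
  filter_upwards with k
  have hsum : ∑' ℓ, f k ℓ = ∑ ℓ ∈ Finset.range (k + 1), f k ℓ := by
    refine tsum_eq_sum fun ℓ hℓ => ?_
    have : ¬ ℓ ≤ k := by simpa using fun h => hℓ (Finset.mem_range.mpr (Nat.lt_succ_of_le h))
    simp [hf, this]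
  rw [hsum, Finset.mul_sum]
  refine Finset.sum_congr rfl fun ℓ hℓ => ?_
  have hk : ℓ ≤ k := Nat.lt_succ_iff.mp (Finset.mem_range.mp hℓ)
  simp only [hf, if_pos hk]
  ring
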